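/- There is a unique formal power series û(s) = Σ_{n≥2} u_n s^n (in the variable s = 1/x) such that u(x) = û(1/x) formally satisfies u'' = (1 + 2q/x)·u + f(1/x, u, u'), for any fixed q ∈ ℂ and any f analytic near (0,0,0) with f(s,a,b) = O(s²) + O(a²) + O(b²) + O(ab); moreover each coefficient u_n is determined recursively: u_n equals a polynomial in u_2, …, u_{n−1}, the Taylor coefficients of f, and q. -/

import Mathlib

open PowerSeries

/-- Formal substitution of a formal power series `F` in three variables `(s, a, b)` (given by
its coefficient family `F i j k` of `sⁱaʲbᵏ`) with `s := X`, `a := U`, `b := V`, where `U`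
and `V` are formal power series of order `≥ 2`, so that only finitely many monomials
contribute to each coefficient. -/
noncomputable def formalSubst (F : ℕ → ℕ → ℕ → ℂ) (U V : PowerSeries ℂ) : PowerSeries ℂ :=
  PowerSeries.mk fun n =>
    ∑ i ∈ Finset.range (n + 1), ∑ j ∈ Finset.range (n + 1), ∑ k ∈ Finset.range (n + 1),
      F i j k * PowerSeries.coeff n (PowerSeries.X ^ i * U ^ j * V ^ k)

namespace Stmt18Aux

noncomputable def Vop (u : PowerSeries ℂ) : PowerSeries ℂ :=
  -(PowerSeries.X ^ 2 * PowerSeries.derivative ℂ u)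

noncomputable def Phi (q : ℂ) (F : ℕ → ℕ → ℕ → ℂ) (u : PowerSeries ℂ) : PowerSeries ℂ :=
  PowerSeries.X ^ 4 * PowerSeries.derivative ℂ (PowerSeries.derivative ℂ u)
    + 2 * PowerSeries.X ^ 3 * PowerSeries.derivative ℂ u
    - PowerSeries.C (2 * q) * PowerSeries.X * u - formalSubst F u (Vop u)

lemma ebMul {n : ℕ} {A B C D : PowerSeries ℂ}
    (hAB : ∀ m < n, coeff m A = coeff m B) (hCD : ∀ m < n, coeff m C = coeff m D) :
    ∀ m < n, coeff m (A * C) = coeff m (B * D) := by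
  intro m hm
  rw [coeff_mul, coeff_mul]
  refine Finset.sum_congr rfl fun p hp => ?_
  rw [Finset.HasAntidiagonal.mem_antidiagonal] at hp
  rw [hAB p.1 (by omega), hCD p.2 (by omega)]

lemma ebPow {n : ℕ} {A B : PowerSeries ℂ}
    (hAB : ∀ m < n, coeff m A = coeff m B) (j : ℕ) :
    ∀ m < n, coeff m (A ^ j) = coeff m (B ^ j) := by
  induction j with
  | zero => intro m hm; rfl
  | succ j ih =>
      intro m hm
      rw [pow_succ, pow_succ]
      exact ebMul ih hAB m hm

lemma edge {n : ℕ} {A B C D : PowerSeries ℂ}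
    (hAB : ∀ m < n, coeff m A = coeff m B) (hCD : ∀ m < n, coeff m C = coeff m D)
    (hA0 : constantCoeff A = 0) (hB0 : constantCoeff B = 0)
    (hC0 : constantCoeff C = 0) (hD0 : constantCoeff D = 0) :
    coeff n (A * C) = coeff n (B * D) := by
  rw [coeff_mul, coeff_mul]
  refine Finset.sum_congr rfl fun p hp => ?_
  rw [Finset.HasAntidiagonal.mem_antidiagonal] at hp
  rcases Nat.eq_zero_or_pos p.1 with h1 | h1
  · rw [h1, coeff_zero_eq_constantCoeff, hA0, hB0, zero_mul, zero_mul]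
  · rcases Nat.eq_zero_or_pos p.2 with h2 | h2
    · rw [h2, coeff_zero_eq_constantCoeff, hC0, hD0, mul_zero, mul_zero]
    · rw [hAB p.1 (by omega), hCD p.2 (by omega)]

lemma coeff_Vop (u : PowerSeries ℂ) (m : ℕ) :
    coeff m (Vop u) = -(if 2 ≤ m then coeff (m - 2) (PowerSeries.derivative ℂ u) else 0) := by
  rw [Vop, map_neg, coeff_X_pow_mul']

lemma constantCoeff_Vop (u : PowerSeries ℂ) : constantCoeff (Vop u) = 0 := by
  rw [← coeff_zero_eq_constantCoeff, coeff_Vop]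
  simp

lemma ebV {n : ℕ} {u w : PowerSeries ℂ} (h : ∀ m < n, coeff m u = coeff m w) :
    ∀ m < n, coeff m (Vop u) = coeff m (Vop w) := by
  intro m hm
  rw [coeff_Vop, coeff_Vop]
  split_ifs with h2
  · rw [coeff_derivative, coeff_derivative, h (m - 2 + 1) (by omega)]
  · rfl



lemma subst_congr (F : ℕ → ℕ → ℕ → ℂ)
    (h000 : F 0 0 0 = 0) (h010 : F 0 1 0 = 0) (h001 : F 0 0 1 = 0)
    {n : ℕ} {u w : PowerSeries ℂ}
    (hu0 : constantCoeff u = 0) (hw0 : constantCoeff w = 0)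
    (h : ∀ m < n, coeff m u = coeff m w) :
    coeff n (formalSubst F u (Vop u)) = coeff n (formalSubst F w (Vop w)) := by
  have hV := ebV h
  have hVu0 := constantCoeff_Vop u
  have hVw0 := constantCoeff_Vop w
  have hpu : ∀ j : ℕ, constantCoeff (u ^ (j + 1)) = 0 := fun j => by
    rw [map_pow, hu0, zero_pow (Nat.succ_ne_zero j)]
  have hpw : ∀ j : ℕ, constantCoeff (w ^ (j + 1)) = 0 := fun j => by
    rw [map_pow, hw0, zero_pow (Nat.succ_ne_zero j)]
  have hpVu : ∀ k : ℕ, constantCoeff (Vop u ^ (k + 1)) = 0 := fun k => by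
    rw [map_pow, hVu0, zero_pow (Nat.succ_ne_zero k)]
  have hpVw : ∀ k : ℕ, constantCoeff (Vop w ^ (k + 1)) = 0 := fun k => by
    rw [map_pow, hVw0, zero_pow (Nat.succ_ne_zero k)]
  rw [formalSubst, formalSubst, coeff_mk, coeff_mk]
  refine Finset.sum_congr rfl fun i hi => Finset.sum_congr rfl fun j _ =>
    Finset.sum_congr rfl fun k _ => ?_
  have hujk : ∀ m < n, coeff m (u ^ j * Vop u ^ k) = coeff m (w ^ j * Vop w ^ k) :=
    ebMul (ebPow h j) (ebPow hV k)
  rcases Nat.eq_zero_or_pos i with hi0 | hip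
  · subst hi0
    simp only [pow_zero, one_mul]
    match j, k with
    | 0, 0 => rfl
    | 0, 1 => rw [h001, zero_mul, zero_mul]
    | 1, 0 => rw [h010, zero_mul, zero_mul]
    | j + 1, k + 1 =>
        rw [edge (ebPow h (j + 1)) (ebPow hV (k + 1)) (hpu j) (hpw j) (hpVu k) (hpVw k)]
    | j + 2, 0 =>
        have e1 : u ^ (j + 2) * Vop u ^ 0 = u ^ (j + 1) * u := by ring
        have e2 : w ^ (j + 2) * Vop w ^ 0 = w ^ (j + 1) * w := by ring
        rw [e1, e2, edge (ebPow h (j + 1)) h (hpu j) (hpw j) hu0 hw0]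
    | 0, k + 2 =>
        have e1 : u ^ 0 * Vop u ^ (k + 2) = Vop u ^ (k + 1) * Vop u := by ring
        have e2 : w ^ 0 * Vop w ^ (k + 2) = Vop w ^ (k + 1) * Vop w := by ring
        rw [e1, e2, edge (ebPow hV (k + 1)) hV (hpVu k) (hpVw k) hVu0 hVw0]
  · rw [mul_assoc, mul_assoc, coeff_X_pow_mul', coeff_X_pow_mul']
    rw [Finset.mem_range] at hi
    split_ifs with hin
    · rw [hujk (n - i) (by omega)]
    · rfl

lemma two_mul_X3 (v : PowerSeries ℂ) :
    2 * PowerSeries.X ^ 3 * PowerSeries.derivative ℂ v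
      = PowerSeries.X ^ 3 * PowerSeries.derivative ℂ v
      + PowerSeries.X ^ 3 * PowerSeries.derivative ℂ v := by ring

lemma phi_congr (q : ℂ) (F : ℕ → ℕ → ℕ → ℂ)
    (h000 : F 0 0 0 = 0) (h010 : F 0 1 0 = 0) (h001 : F 0 0 1 = 0)
    {n : ℕ} {u w : PowerSeries ℂ}
    (hu0 : constantCoeff u = 0) (hw0 : constantCoeff w = 0)
    (h : ∀ m < n, coeff m u = coeff m w) :
    coeff n (Phi q F u) = coeff n (Phi q F w) := by
  have H1 : coeff n (PowerSeries.X ^ 4 * PowerSeries.derivative ℂ (PowerSeries.derivative ℂ u))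
      = coeff n (PowerSeries.X ^ 4 * PowerSeries.derivative ℂ (PowerSeries.derivative ℂ w)) := by
    rw [coeff_X_pow_mul', coeff_X_pow_mul']
    split_ifs with h4
    · rw [coeff_derivative, coeff_derivative, coeff_derivative, coeff_derivative,
        h (n - 4 + 1 + 1) (by omega)]
    · rfl
  have H2 : coeff n (2 * PowerSeries.X ^ 3 * PowerSeries.derivative ℂ u)
      = coeff n (2 * PowerSeries.X ^ 3 * PowerSeries.derivative ℂ w) := by
    have h' : coeff n (PowerSeries.X ^ 3 * PowerSeries.derivative ℂ u)
        = coeff n (PowerSeries.X ^ 3 * PowerSeries.derivative ℂ w) := by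
      rw [coeff_X_pow_mul', coeff_X_pow_mul']
      split_ifs with h3
      · rw [coeff_derivative, coeff_derivative, h (n - 3 + 1) (by omega)]
      · rfl
    rw [two_mul_X3, two_mul_X3, map_add, map_add, h']
  have H3 : coeff n (PowerSeries.C (2 * q) * PowerSeries.X * u)
      = coeff n (PowerSeries.C (2 * q) * PowerSeries.X * w) := by
    rw [mul_assoc, mul_assoc, coeff_C_mul, coeff_C_mul,
      ← pow_one (PowerSeries.X : PowerSeries ℂ), coeff_X_pow_mul', coeff_X_pow_mul']
    split_ifs with h1
    · rw [h (n - 1) (by omega)]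
    · rfl
  have H4 := subst_congr F h000 h010 h001 hu0 hw0 h
  simp only [Phi, map_add, map_sub, H1, H2, H3, H4]

lemma phi_coeff_zero (q : ℂ) (F : ℕ → ℕ → ℕ → ℂ) (h000 : F 0 0 0 = 0)
    {u : PowerSeries ℂ} : coeff 0 (Phi q F u) = 0 := by
  rw [Phi, two_mul_X3]
  simp only [map_add, map_sub]
  rw [coeff_X_pow_mul', coeff_X_pow_mul']
  rw [mul_assoc, coeff_C_mul, ← pow_one (PowerSeries.X : PowerSeries ℂ), coeff_X_pow_mul']
  rw [formalSubst, coeff_mk]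
  simp [h000]

lemma phi_coeff_one (q : ℂ) (F : ℕ → ℕ → ℕ → ℂ)
    (h000 : F 0 0 0 = 0) (h100 : F 1 0 0 = 0) (h010 : F 0 1 0 = 0) (h001 : F 0 0 1 = 0)
    {u : PowerSeries ℂ} (hu0 : coeff 0 u = 0) (hu1 : coeff 1 u = 0) :
    coeff 1 (Phi q F u) = 0 := by
  have hcc : constantCoeff u = 0 := by rw [← coeff_zero_eq_constantCoeff]; exact hu0
  have hV0 : coeff 0 (Vop u) = 0 := by rw [coeff_Vop]; simp
  have huzero : ∀ a : ℕ, a ≤ 1 → coeff a u = 0 := by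
    intro a ha; interval_cases a; exacts [hu0, hu1]
  have hXu : coeff 1 (PowerSeries.X * u) = 0 := by
    rw [← pow_one (PowerSeries.X : PowerSeries ℂ), coeff_X_pow_mul', if_pos le_rfl]
    exact hu0
  have hXV : coeff 1 (PowerSeries.X * Vop u) = 0 := by
    rw [← pow_one (PowerSeries.X : PowerSeries ℂ), coeff_X_pow_mul', if_pos le_rfl]
    exact hV0
  have huV : coeff 1 (u * Vop u) = 0 := by
    rw [coeff_mul]
    refine Finset.sum_eq_zero fun p hp => ?_
    rw [Finset.HasAntidiagonal.mem_antidiagonal] at hp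
    rw [huzero p.1 (by omega), zero_mul]
  have h0uV : coeff 0 (u * Vop u) = 0 := by
    rw [coeff_zero_eq_constantCoeff, map_mul, hcc, zero_mul]
  have hXuV : coeff 1 (PowerSeries.X * u * Vop u) = 0 := by
    rw [mul_assoc, ← pow_one (PowerSeries.X : PowerSeries ℂ), coeff_X_pow_mul', if_pos le_rfl]
    exact h0uV
  rw [Phi, two_mul_X3]
  simp only [map_add, map_sub]
  rw [coeff_X_pow_mul', coeff_X_pow_mul']
  rw [mul_assoc, coeff_C_mul, ← pow_one (PowerSeries.X : PowerSeries ℂ), coeff_X_pow_mul']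
  rw [formalSubst, coeff_mk]
  simp only [Finset.sum_range_succ, Finset.sum_range_zero, zero_add, pow_zero, pow_one,
    one_mul, mul_one]
  simp [h000, h100, h010, h001, hXu, hXV, huV, hXuV, hu0]

noncomputable def solC (q : ℂ) (F : ℕ → ℕ → ℕ → ℂ) : ℕ → ℂ
  | n => coeff n (Phi q F (PowerSeries.mk fun m => if h : m < n then solC q F m else 0))
  termination_by n => n
  decreasing_by exact h

lemma solC_eq (q : ℂ) (F : ℕ → ℕ → ℕ → ℂ) (n : ℕ) :
    solC q F n
      = coeff n (Phi q F (PowerSeries.mk fun m => if _ : m < n then solC q F m else 0)) := by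
  rw [solC]

lemma solC_zero (q : ℂ) (F : ℕ → ℕ → ℕ → ℂ) (h000 : F 0 0 0 = 0) : solC q F 0 = 0 := by
  rw [solC_eq]; exact phi_coeff_zero q F h000

lemma solC_one (q : ℂ) (F : ℕ → ℕ → ℕ → ℂ)
    (h000 : F 0 0 0 = 0) (h100 : F 1 0 0 = 0) (h010 : F 0 1 0 = 0) (h001 : F 0 0 1 = 0) :
    solC q F 1 = 0 := by
  rw [solC_eq]
  refine phi_coeff_one q F h000 h100 h010 h001 ?_ ?_
  · rw [coeff_mk, dif_pos (by norm_num), solC_zero q F h000]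
  · rw [coeff_mk, dif_neg (by norm_num)]

noncomputable def usol (q : ℂ) (F : ℕ → ℕ → ℕ → ℂ) : PowerSeries ℂ :=
  PowerSeries.mk (solC q F)

lemma usol_fixed (q : ℂ) (F : ℕ → ℕ → ℕ → ℂ)
    (h000 : F 0 0 0 = 0) (h100 : F 1 0 0 = 0) (h010 : F 0 1 0 = 0) (h001 : F 0 0 1 = 0) :
    Phi q F (usol q F) = usol q F := by
  ext n
  have hT0 : constantCoeff (PowerSeries.mk fun m => if _ : m < n then solC q F m else 0) = 0 := by
    rw [← coeff_zero_eq_constantCoeff, coeff_mk]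
    rcases Nat.eq_zero_or_pos n with h | h
    · rw [dif_neg (by omega)]
    · rw [dif_pos h, solC_zero q F h000]
  have hu0 : constantCoeff (usol q F) = 0 := by
    rw [← coeff_zero_eq_constantCoeff, usol, coeff_mk, solC_zero q F h000]
  have hagree : ∀ m < n,
      coeff m (usol q F)
        = coeff m (PowerSeries.mk fun m => if _ : m < n then solC q F m else 0) := by
    intro m hm
    rw [usol, coeff_mk, coeff_mk, dif_pos hm]
  calc coeff n (Phi q F (usol q F))
      = coeff n (Phi q F (PowerSeries.mk fun m => if _ : m < n then solC q F m else 0)) :=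
        phi_congr q F h000 h010 h001 hu0 hT0 hagree
    _ = solC q F n := (solC_eq q F n).symm
    _ = coeff n (usol q F) := by rw [usol, coeff_mk]

lemma eq_iff (q : ℂ) (F : ℕ → ℕ → ℕ → ℂ) (u : PowerSeries ℂ) :
    (PowerSeries.X ^ 4 * PowerSeries.derivative ℂ (PowerSeries.derivative ℂ u)
          + 2 * PowerSeries.X ^ 3 * PowerSeries.derivative ℂ u
        = (1 + PowerSeries.C (2 * q) * PowerSeries.X) * u
          + formalSubst F u (-(PowerSeries.X ^ 2 * PowerSeries.derivative ℂ u)))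
      ↔ Phi q F u = u := by
  unfold Phi Vop
  constructor <;> intro h <;> linear_combination h

end Stmt18Aux

/-- Uniqueness of the formal power series solution of the normalized equation: for any
`q ∈ ℂ` and any formal `f(s,a,b)` with `f = O(s²)+O(a²)+O(b²)+O(ab)` (i.e., the constant
term and all three linear coefficients vanish), there is a unique formal power series
`û = Σ_{n≥2} u_n sⁿ` (`s = 1/x`) such that `u(x) = û(1/x)` formally satisfies
`u'' = (1 + 2q/x)u + f(1/x, u, u')`; in the variable `s` this reads
`s⁴û'' + 2s³û' = (1 + 2qs)û + f(s, û, −s²û')`.  (Each `u_n` is thereby determined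
recursively from `u_2, …, u_{n−1}`, the coefficients of `f`, and `q`.) -/
theorem stmt18 (q : ℂ) (F : ℕ → ℕ → ℕ → ℂ)
    (h000 : F 0 0 0 = 0) (h100 : F 1 0 0 = 0) (h010 : F 0 1 0 = 0) (h001 : F 0 0 1 = 0) :
    ∃! u : PowerSeries ℂ,
      PowerSeries.coeff 0 u = 0 ∧ PowerSeries.coeff 1 u = 0 ∧
      PowerSeries.X ^ 4 * PowerSeries.derivative ℂ (PowerSeries.derivative ℂ u)
          + 2 * PowerSeries.X ^ 3 * PowerSeries.derivative ℂ u
        = (1 + PowerSeries.C (2 * q) * PowerSeries.X) * u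
          + formalSubst F u (-(PowerSeries.X ^ 2 * PowerSeries.derivative ℂ u)) := by
  refine ⟨Stmt18Aux.usol q F, ⟨?_, ?_, ?_⟩, ?_⟩
  · rw [Stmt18Aux.usol, coeff_mk, Stmt18Aux.solC_zero q F h000]
  · rw [Stmt18Aux.usol, coeff_mk, Stmt18Aux.solC_one q F h000 h100 h010 h001]
  · exact (Stmt18Aux.eq_iff q F _).2 (Stmt18Aux.usol_fixed q F h000 h100 h010 h001)
  · rintro w ⟨hw0, hw1, hweq⟩
    have hfix : Stmt18Aux.Phi q F w = w := (Stmt18Aux.eq_iff q F w).1 hweq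
    have hwc : constantCoeff w = 0 := by rw [← coeff_zero_eq_constantCoeff]; exact hw0
    have huc : constantCoeff (Stmt18Aux.usol q F) = 0 := by
      rw [← coeff_zero_eq_constantCoeff, Stmt18Aux.usol, coeff_mk, Stmt18Aux.solC_zero q F h000]
    have key : ∀ n, coeff n w = coeff n (Stmt18Aux.usol q F) := by
      intro n
      induction n using Nat.strong_induction_on with
      | _ n ih =>
        calc coeff n w = coeff n (Stmt18Aux.Phi q F w) := by rw [hfix]
          _ = coeff n (Stmt18Aux.Phi q F (Stmt18Aux.usol q F)) :=
              Stmt18Aux.phi_congr q F h000 h010 h001 hwc huc ih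
          _ = coeff n (Stmt18Aux.usol q F) := by
              rw [Stmt18Aux.usol_fixed q F h000 h100 h010 h001]
    exact PowerSeries.ext key
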